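/- arXiv:2206.09945 — 2 statements merged into one kernel-verified Lean document; each statement's English description precedes it below -/
import Mathlib

section
/- Let K ∈ ℝ^{(n−p)×p}, let i ∈ {1,…,p} with e_i^T·A12 ≠ 0, let Q ∈ ℝ^{(n−p)×(n−p)} be an orthogonal matrix satisfying e_i^T·A12·Q^T = ‖e_i^T·A12‖·e_{n−p}^T (Euclidean norm; e_{n−p} the last standard basis vector of ℝ^{n−p}), and let 1 ≤ n_i ≤ n−p be such that [0, I_{n_i}]·Q·(A22 + K·A12)·Q^T·[I_{n−p−n_i}; 0] = 0. Then the i-th row of [W V] admits the order-n_i realization e_i^T·[W V] = e_i^T·[A11 − A12·K, B1] + C̃·(λI_{n_i} − Ã)^{-1}·B̃, where Ã := [0, I_{n_i}]·Q·(A22 + K·A12)·Q^T·[0, I_{n_i}]^T ∈ ℝ^{n_i×n_i}, B̃ := [0, I_{n_i}]·Q·[A_K, K·B1 + B2] ∈ ℝ^{n_i×(p+m)}, and C̃ := e_i^T·A12·Q^T·[0, I_{n_i}]^T ∈ ℝ^{1×n_i}. -/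
open Matrix Polynomial

set_option synthInstance.maxHeartbeats 1000000
set_option maxHeartbeats 1000000

noncomputable section

/-- The field of real rational functions. -/
abbrev FF : Type := RatFunc ℝ

/-- The rational function `λ` (the image of the polynomial indeterminate `X`). -/
noncomputable def lam : FF := RatFunc.X

/-- Entrywise embedding of a real matrix into matrices over `FF`. -/
noncomputable def mapF {k l : Type} (M : Matrix k l ℝ) : Matrix k l FF :=
  M.map (algebraMap ℝ FF)

/-- The pencil `λ I - M` over `FF`, for a real square matrix `M`. -/
noncomputable def lamI {k : Type} [Fintype k] [DecidableEq k] (M : Matrix k k ℝ) :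
    Matrix k k FF := lam • (1 : Matrix k k FF) - mapF M

/-- Entrywise complexification of a real matrix. -/
def mapC {k l : Type} (M : Matrix k l ℝ) : Matrix k l ℂ :=
  M.map (algebraMap ℝ ℂ)

/-- A real rational function is stable if every complex root of its reduced denominator
has real part `< 0`. -/
def StableF (f : RatFunc ℝ) : Prop :=
  ∀ z : ℂ, ((f.denom).map (algebraMap ℝ ℂ)).IsRoot z → z.re < 0

/-- A real square matrix is Hurwitz if all roots of its characteristic polynomial
have real part `< 0`. -/
def IsHurwitz {k : Type} [Fintype k] [DecidableEq k] (M : Matrix k k ℝ) : Prop :=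
  ∀ z : ℂ, ((M.charpoly).map (algebraMap ℝ ℂ)).IsRoot z → z.re < 0

/-- `A_K := K A11 - K A12 K + A21 - A22 K`. -/
noncomputable def AKmat {p r : ℕ} (A11 : Matrix (Fin p) (Fin p) ℝ)
    (A12 : Matrix (Fin p) (Fin r) ℝ) (A21 : Matrix (Fin r) (Fin p) ℝ)
    (A22 : Matrix (Fin r) (Fin r) ℝ) (K : Matrix (Fin r) (Fin p) ℝ) :
    Matrix (Fin r) (Fin p) ℝ :=
  K * A11 - K * A12 * K + A21 - A22 * K

/-- The `W` member of the SRTR pair obtained from `K`. -/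
noncomputable def srtrW {p r : ℕ} (A11 : Matrix (Fin p) (Fin p) ℝ)
    (A12 : Matrix (Fin p) (Fin r) ℝ) (A21 : Matrix (Fin r) (Fin p) ℝ)
    (A22 : Matrix (Fin r) (Fin r) ℝ) (K : Matrix (Fin r) (Fin p) ℝ) :
    Matrix (Fin p) (Fin p) FF :=
  mapF (A11 - A12 * K) +
    mapF A12 * (lamI (A22 + K * A12))⁻¹ * mapF (AKmat A11 A12 A21 A22 K)

/-- The `V` member of the SRTR pair obtained from `K`. -/
noncomputable def srtrV {p r m : ℕ} (A12 : Matrix (Fin p) (Fin r) ℝ)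
    (A22 : Matrix (Fin r) (Fin r) ℝ) (B1 : Matrix (Fin p) (Fin m) ℝ)
    (B2 : Matrix (Fin r) (Fin m) ℝ) (K : Matrix (Fin r) (Fin p) ℝ) :
    Matrix (Fin p) (Fin m) FF :=
  mapF B1 + mapF A12 * (lamI (A22 + K * A12))⁻¹ * mapF (K * B1 + B2)

/-- The plant transfer function `G = [I_p 0] (λ I_n - A)⁻¹ B`. -/
noncomputable def plantG {p r m : ℕ} (A11 : Matrix (Fin p) (Fin p) ℝ)
    (A12 : Matrix (Fin p) (Fin r) ℝ) (A21 : Matrix (Fin r) (Fin p) ℝ)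
    (A22 : Matrix (Fin r) (Fin r) ℝ) (B1 : Matrix (Fin p) (Fin m) ℝ)
    (B2 : Matrix (Fin r) (Fin m) ℝ) : Matrix (Fin p) (Fin m) FF :=
  fromCols (1 : Matrix (Fin p) (Fin p) FF) (0 : Matrix (Fin p) (Fin r) FF) *
    (lamI (fromBlocks A11 A12 A21 A22))⁻¹ * mapF (fromRows B1 B2)

/-- `(A12, A22)` is observable: `[A22 - μ I ; A12]` has full column rank for all `μ : ℂ`. -/
def ObsPair {p r : ℕ} (A12 : Matrix (Fin p) (Fin r) ℝ)
    (A22 : Matrix (Fin r) (Fin r) ℝ) : Prop :=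
  ∀ μ : ℂ, (fromRows (mapC A22 - μ • (1 : Matrix (Fin r) (Fin r) ℂ)) (mapC A12)).rank = r

/-- `(A, B)` is controllable: `[A - μ I, B]` has full row rank for all `μ : ℂ`. -/
def CtrbPair {p r m : ℕ} (A : Matrix (Fin p ⊕ Fin r) (Fin p ⊕ Fin r) ℝ)
    (B : Matrix (Fin p ⊕ Fin r) (Fin m) ℝ) : Prop :=
  ∀ μ : ℂ, (fromCols (mapC A - μ • (1 : Matrix (Fin p ⊕ Fin r) (Fin p ⊕ Fin r) ℂ))
    (mapC B)).rank = p + r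

/-! ### Auxiliary lemmas -/

lemma lamI_eq_map {k : Type} [Fintype k] [DecidableEq k] (M : Matrix k k ℝ) :
    lamI M = (charmatrix M).map (algebraMap ℝ[X] FF) := by
  ext a b
  by_cases h : a = b
  · subst h
    simp [lamI, mapF, charmatrix_apply_eq, lam,
      IsScalarTower.algebraMap_apply ℝ ℝ[X] FF]
  · simp [lamI, mapF, charmatrix_apply_ne _ _ _ h, Matrix.one_apply_ne h, lam,
      IsScalarTower.algebraMap_apply ℝ ℝ[X] FF]

lemma det_lamI_isUnit {k : Type} [Fintype k] [DecidableEq k] (M : Matrix k k ℝ) :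
    IsUnit (lamI M).det := by
  rw [lamI_eq_map, ← RingHom.mapMatrix_apply, ← RingHom.map_det, isUnit_iff_ne_zero]
  intro h
  have h2 : M.charpoly = 0 := by
    apply RatFunc.algebraMap_injective ℝ
    simpa [Matrix.charpoly] using h
  exact (Matrix.charpoly_monic M).ne_zero h2

lemma lamI_mul_inv {k : Type} [Fintype k] [DecidableEq k] (M : Matrix k k ℝ) :
    lamI M * (lamI M)⁻¹ = 1 := Matrix.mul_nonsing_inv _ (det_lamI_isUnit M)

lemma lamI_fromBlocks {s t : Type} [Fintype s] [DecidableEq s] [Fintype t] [DecidableEq t]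
    (G : Matrix (s ⊕ t) (s ⊕ t) ℝ) (hG : G.toBlocks₂₁ = 0) :
    lamI G = fromBlocks (lamI G.toBlocks₁₁) (-(mapF G.toBlocks₁₂)) 0
      (lamI G.toBlocks₂₂) := by
  ext a b
  have hG' : ∀ a b, G (Sum.inr a) (Sum.inl b) = 0 := by
    intro a b
    have := congrFun (congrFun hG a) b
    simpa [Matrix.toBlocks₂₁] using this
  cases a <;> cases b <;>
    simp [lamI, mapF, Matrix.fromBlocks, Matrix.toBlocks₁₁, Matrix.toBlocks₁₂,
      Matrix.toBlocks₂₂, Matrix.one_apply, Matrix.sub_apply, hG']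

/-- Inverse of a block upper-triangular pencil. -/
lemma lamI_fromBlocks_inv {s t : Type} [Fintype s] [DecidableEq s] [Fintype t] [DecidableEq t]
    (G : Matrix (s ⊕ t) (s ⊕ t) ℝ) (hG : G.toBlocks₂₁ = 0) :
    (lamI G)⁻¹ = fromBlocks (lamI G.toBlocks₁₁)⁻¹
      ((lamI G.toBlocks₁₁)⁻¹ * mapF G.toBlocks₁₂ * (lamI G.toBlocks₂₂)⁻¹) 0
      (lamI G.toBlocks₂₂)⁻¹ := by
  apply Matrix.inv_eq_right_inv
  rw [lamI_fromBlocks G hG, Matrix.fromBlocks_multiply]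
  have h11 := lamI_mul_inv G.toBlocks₁₁
  have h22 := lamI_mul_inv G.toBlocks₂₂
  have hmid : lamI G.toBlocks₁₁ *
      ((lamI G.toBlocks₁₁)⁻¹ * mapF G.toBlocks₁₂ * (lamI G.toBlocks₂₂)⁻¹) +
      -mapF G.toBlocks₁₂ * (lamI G.toBlocks₂₂)⁻¹ = 0 := by
    rw [← Matrix.mul_assoc, ← Matrix.mul_assoc, h11, Matrix.one_mul, Matrix.neg_mul]
    exact add_neg_cancel _
  rw [h11, h22, hmid]
  simp [Matrix.fromBlocks_one]

lemma mapF_mul {k l o : Type} [Fintype l] (A : Matrix k l ℝ) (B : Matrix l o ℝ) :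
    mapF (A * B) = mapF A * mapF B := by
  simp [mapF, Matrix.map_mul]

lemma mapF_one {k : Type} [Fintype k] [DecidableEq k] :
    mapF (1 : Matrix k k ℝ) = 1 := by
  simp [mapF, Matrix.map_one]


lemma lamI_conj {k l : Type} [Fintype k] [DecidableEq k] [Fintype l] [DecidableEq l]
    (M : Matrix k k ℝ) (Q : Matrix l k ℝ) (h1 : Q * Qᵀ = 1) :
    lamI (Q * M * Qᵀ) = mapF Q * lamI M * mapF Qᵀ := by
  have h1' : mapF Q * mapF Qᵀ = 1 := by rw [← mapF_mul, h1, mapF_one]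
  simp only [lamI, Matrix.mul_sub, Matrix.sub_mul, mapF_mul]
  rw [Matrix.mul_smul, Matrix.smul_mul, Matrix.mul_one, h1']

lemma lamI_mul_inv' {k : Type} [Fintype k] [DecidableEq k] (M : Matrix k k ℝ) :
    lamI M * (lamI M)⁻¹ = 1 := Matrix.mul_nonsing_inv _ (det_lamI_isUnit M)

lemma lamI_inv_conj {k l : Type} [Fintype k] [DecidableEq k] [Fintype l] [DecidableEq l]
    (M : Matrix k k ℝ) (Q : Matrix l k ℝ) (h1 : Q * Qᵀ = 1) (h2 : Qᵀ * Q = 1) :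
    (lamI M)⁻¹ = mapF Qᵀ * (lamI (Q * M * Qᵀ))⁻¹ * mapF Q := by
  have h1' : mapF Q * mapF Qᵀ = 1 := by rw [← mapF_mul, h1, mapF_one]
  have h2' : mapF Qᵀ * mapF Q = 1 := by rw [← mapF_mul, h2, mapF_one]
  apply Matrix.inv_eq_right_inv
  have hM : lamI M = mapF Qᵀ * lamI (Q * M * Qᵀ) * mapF Q := by
    rw [lamI_conj M Q h1]
    symm
    calc mapF Qᵀ * (mapF Q * lamI M * mapF Qᵀ) * mapF Q
        = (mapF Qᵀ * mapF Q) * lamI M * (mapF Qᵀ * mapF Q) := by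
          simp only [Matrix.mul_assoc]
      _ = lamI M := by rw [h2', Matrix.one_mul, Matrix.mul_one]
  rw [hM]
  calc (mapF Qᵀ * lamI (Q * M * Qᵀ) * mapF Q) *
        (mapF Qᵀ * (lamI (Q * M * Qᵀ))⁻¹ * mapF Q)
      = mapF Qᵀ * (lamI (Q * M * Qᵀ) * ((mapF Q * mapF Qᵀ) *
          ((lamI (Q * M * Qᵀ))⁻¹ * mapF Q))) := by simp only [Matrix.mul_assoc]
    _ = mapF Qᵀ * (lamI (Q * M * Qᵀ) * (lamI (Q * M * Qᵀ))⁻¹ * mapF Q) := by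
        rw [h1', Matrix.one_mul]
        simp only [Matrix.mul_assoc]
    _ = mapF Qᵀ * mapF Q := by rw [lamI_mul_inv', Matrix.one_mul]
    _ = 1 := h2'


/-- if the `i`-th row of `A12` is nonzero, `Q` is orthogonal and compresses
that row into its last entry, and the `(2,1)`-block of `Q (A22 + K A12) Qᵀ` vanishes,
then the `i`-th row of `[W V]` admits the displayed realization of order `n_i = t`. -/

theorem stmt_15 (p r m s t : ℕ) (hp : 0 < p) (hr : 0 < r) (hm : 0 < m)
    (ht : 0 < t) (hst : s + t = r)
    (A11 : Matrix (Fin p) (Fin p) ℝ) (A12 : Matrix (Fin p) (Fin r) ℝ)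
    (A21 : Matrix (Fin r) (Fin p) ℝ) (A22 : Matrix (Fin r) (Fin r) ℝ)
    (B1 : Matrix (Fin p) (Fin m) ℝ) (B2 : Matrix (Fin r) (Fin m) ℝ)
    (K : Matrix (Fin r) (Fin p) ℝ) (i : Fin p)
    (hi : (fun j : Fin r => A12 i j) ≠ 0)
    (Q : Matrix (Fin s ⊕ Fin t) (Fin r) ℝ)
    (hQ1 : Q * Qᵀ = 1) (hQ2 : Qᵀ * Q = 1)
    (hcompl : ∀ a : Fin s, (A12 * Qᵀ) i (Sum.inl a) = 0)
    (hcompr : ∀ a : Fin t, (A12 * Qᵀ) i (Sum.inr a) =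
      if (a : ℕ) + 1 = t then Real.sqrt (∑ j : Fin r, A12 i j ^ 2) else 0)
    (hv : (Q * (A22 + K * A12) * Qᵀ).toBlocks₂₁ = 0) :
    ∀ c : Fin p ⊕ Fin m,
      fromCols (srtrW A11 A12 A21 A22 K) (srtrV A12 A22 B1 B2 K) i c =
        algebraMap ℝ FF (fromCols (A11 - A12 * K) B1 i c) +
        Matrix.vecMul (fun a : Fin t => algebraMap ℝ FF ((A12 * Qᵀ) i (Sum.inr a)))
          ((lamI ((Q * (A22 + K * A12) * Qᵀ).toBlocks₂₂))⁻¹ *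
            mapF (toRows₂ (Q * fromCols (AKmat A11 A12 A21 A22 K) (K * B1 + B2)))) c := by
  intro c
  set M : Matrix (Fin r) (Fin r) ℝ := A22 + K * A12 with hMdef
  set NN : Matrix (Fin r) (Fin p ⊕ Fin m) ℝ :=
    fromCols (AKmat A11 A12 A21 A22 K) (K * B1 + B2) with hNNdef
  set G : Matrix (Fin s ⊕ Fin t) (Fin s ⊕ Fin t) ℝ := Q * M * Qᵀ with hGdef
  -- LHS reduction
  have hL : fromCols (srtrW A11 A12 A21 A22 K) (srtrV A12 A22 B1 B2 K) i c =
      algebraMap ℝ FF (fromCols (A11 - A12 * K) B1 i c) +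
      (mapF A12 * ((lamI M)⁻¹ * mapF NN)) i c := by
    cases c <;>
      simp [srtrW, srtrV, hNNdef, hMdef, mapF, Matrix.add_apply, Matrix.mul_apply,
        Matrix.fromCols_apply_inl, Matrix.fromCols_apply_inr, Matrix.mul_assoc,
        Finset.mul_sum, Finset.sum_mul]
  rw [hL]
  congr 1
  -- rewrite inverse via conjugation
  rw [lamI_inv_conj M Q hQ1 hQ2, lamI_fromBlocks_inv G hv]
  -- entry computation
  have hQNN : mapF Q * mapF NN = mapF (Q * NN) := (mapF_mul Q NN).symm
  have key : mapF A12 * (mapF Qᵀ *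
        (fromBlocks (lamI G.toBlocks₁₁)⁻¹
          ((lamI G.toBlocks₁₁)⁻¹ * mapF G.toBlocks₁₂ * (lamI G.toBlocks₂₂)⁻¹) 0
          (lamI G.toBlocks₂₂)⁻¹) * mapF Q * mapF NN) =
      mapF (A12 * Qᵀ) * ((fromBlocks (lamI G.toBlocks₁₁)⁻¹
          ((lamI G.toBlocks₁₁)⁻¹ * mapF G.toBlocks₁₂ * (lamI G.toBlocks₂₂)⁻¹) 0
          (lamI G.toBlocks₂₂)⁻¹) * mapF (Q * NN)) := by
    rw [mapF_mul, mapF_mul]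
    simp only [Matrix.mul_assoc]
  rw [key, Matrix.mul_apply, Fintype.sum_sum_type]
  have h0 : ∀ a : Fin s, mapF (A12 * Qᵀ) i (Sum.inl a) = (0 : FF) := fun a => by
    simp [mapF, hcompl a]
  rw [Finset.sum_eq_zero (fun a _ => by rw [h0 a, zero_mul]), zero_add]
  simp only [Matrix.vecMul, dotProduct]
  have hrow : ∀ b : Fin t,
      ((fromBlocks (lamI G.toBlocks₁₁)⁻¹
          ((lamI G.toBlocks₁₁)⁻¹ * mapF G.toBlocks₁₂ * (lamI G.toBlocks₂₂)⁻¹) 0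
          (lamI G.toBlocks₂₂)⁻¹) * mapF (Q * NN)) (Sum.inr b) c =
      ((lamI G.toBlocks₂₂)⁻¹ * mapF (toRows₂ (Q * NN))) b c := by
    intro b
    rw [Matrix.mul_apply, Matrix.mul_apply, Fintype.sum_sum_type]
    rw [Finset.sum_eq_zero (fun x _ => by
      rw [Matrix.fromBlocks_apply₂₁, Matrix.zero_apply, zero_mul]), zero_add]
    refine Finset.sum_congr rfl fun x _ => ?_
    rw [Matrix.fromBlocks_apply₂₂]
    rfl
  refine Finset.sum_congr rfl fun a _ => ?_
  rw [hrow a]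
  rfl
end
end

section
/- Assume (A12, A22) is observable, (A, B) is controllable, and K ∈ ℝ^{(n−p)×p} is such that A22 + K·A12 is Hurwitz. Fix i ∈ {1,…,p} and define A_{di} := [[0, e_i^T·A12],[0, A22 + K·A12]] ∈ ℝ^{(n−p+1)×(n−p+1)}, B_{di} := [[e_i^T·(A11 − A12·K), e_i^T·B1],[A_K, K·B1 + B2]] ∈ ℝ^{(n−p+1)×(p+m)}, and C_{di} := [1, 0, …, 0] ∈ ℝ^{1×(n−p+1)}. Then for every μ ∈ ℂ with Re μ ≥ 0, the complexified stacked matrix [A_{di} − μI_{n−p+1}; C_{di}] has full column rank n−p+1 and the complexified matrix [A_{di} − μI_{n−p+1}, B_{di}] has full row rank n−p+1; that is, this realization of the i-th row of K_d(λ) = [λ^{-1}·W, λ^{-1}·V] is detectable and stabilizable. -/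
open Matrix Polynomial

set_option synthInstance.maxHeartbeats 1000000
set_option maxHeartbeats 1000000

noncomputable section

section auxSRTR
variable {n' m' k : Type} [Fintype n'] [Fintype m'] [Fintype k] [DecidableEq k]

lemma aux_rank_eq_card (M : Matrix n' m' ℂ) :
    M.rank = Fintype.card m' ↔ ∀ v : m' → ℂ, M *ᵥ v = 0 → v = 0 := by
  have hrn := LinearMap.finrank_range_add_finrank_ker M.mulVecLin
  rw [Module.finrank_fintype_fun_eq_card] at hrn
  constructor
  · intro h v hv
    have hker : Module.finrank ℂ (LinearMap.ker M.mulVecLin) = 0 := by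
      rw [Matrix.rank] at h; omega
    have hbot : LinearMap.ker M.mulVecLin = ⊥ := Submodule.finrank_eq_zero.mp hker
    have hv' : v ∈ LinearMap.ker M.mulVecLin := by
      rw [LinearMap.mem_ker, Matrix.mulVecLin_apply]; exact hv
    rw [hbot] at hv'; simpa using hv'
  · intro h
    have hbot : LinearMap.ker M.mulVecLin = ⊥ :=
      LinearMap.ker_eq_bot'.mpr fun v hv => h v (by rwa [Matrix.mulVecLin_apply] at hv)
    rw [Matrix.rank]
    rw [hbot, finrank_bot, add_zero] at hrn
    exact hrn

lemma aux_eval_charpoly (M : Matrix k k ℂ) (μ : ℂ) :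
    M.charpoly.eval μ = (μ • (1 : Matrix k k ℂ) - M).det := by
  rw [Matrix.charpoly, ← Polynomial.coe_evalRingHom, RingHom.map_det]
  congr 1
  ext i j
  by_cases h : i = j <;>
    simp [h, Matrix.charmatrix_apply, Matrix.one_apply, Matrix.diagonal_apply,
      Matrix.smul_apply, Matrix.sub_apply]

lemma aux_hurwitz_mulVec (F : Matrix k k ℝ) (hF : IsHurwitz F) {μ : ℂ} (hμ : 0 ≤ μ.re)
    (y : k → ℂ) (hy : (mapC F - μ • 1) *ᵥ y = 0) : y = 0 := by
  set N : Matrix k k ℂ := mapC F - μ • 1 with hN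
  have hdet : N.det ≠ 0 := by
    intro h0
    have h1 : (μ • (1 : Matrix k k ℂ) - mapC F).det = 0 := by
      have he : μ • (1 : Matrix k k ℂ) - mapC F = -N := (neg_sub _ _).symm
      rw [he, Matrix.det_neg, h0, mul_zero]
    have h2 : (F.charpoly.map (algebraMap ℝ ℂ)).IsRoot μ := by
      rw [Polynomial.IsRoot, ← Matrix.charpoly_map, aux_eval_charpoly]
      exact h1
    exact absurd (hF μ h2) (not_lt.mpr hμ)
  calc y = (N⁻¹ * N) *ᵥ y := by rw [Matrix.nonsing_inv_mul N (Ne.isUnit hdet), Matrix.one_mulVec]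
  _ = N⁻¹ *ᵥ (N *ᵥ y) := by rw [Matrix.mulVec_mulVec]
  _ = 0 := by rw [hy, Matrix.mulVec_zero]

lemma aux_vecMul_smul_one (a : ℂ) (v : k → ℂ) :
    v ᵥ* (a • (1 : Matrix k k ℂ)) = a • v := by
  funext j
  simp [Matrix.vecMul, dotProduct, Matrix.one_apply, mul_comm, Finset.sum_ite_eq,
    mul_ite]

lemma mapC_add {a b : Type} (M N : Matrix a b ℝ) : mapC (M + N) = mapC M + mapC N := by
  ext i j; simp [mapC]

lemma mapC_sub {a b : Type} (M N : Matrix a b ℝ) : mapC (M - N) = mapC M - mapC N := by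
  ext i j; simp [mapC]

lemma mapC_mul {a b c : Type} [Fintype b] (M : Matrix a b ℝ) (N : Matrix b c ℝ) :
    mapC (M * N) = mapC M * mapC N :=
  Matrix.map_mul

lemma aux_fin_one_vecMul {c : Type} [Fintype c] {p : ℕ}
    (v : Fin 1 → ℂ) (M : Matrix (Fin p) c ℝ) (i : Fin p) :
    (v ᵥ* mapC (Matrix.of fun (_ : Fin 1) j => M i j)) =
      v 0 • (Pi.single i (1:ℂ) ᵥ* mapC M) := by
  funext j
  simp [Matrix.vecMul, dotProduct, mapC]

end auxSRTR

/-- under observability, controllability, and `A22 + K A12` Hurwitz, the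
displayed order-`(n-p+1)` realization of the `i`-th row of `K_d(λ) = [λ⁻¹ W, λ⁻¹ V]` is
detectable and stabilizable. -/
theorem stmt_19 (p r m : ℕ) (hp : 0 < p) (hr : 0 < r) (hm : 0 < m)
    (A11 : Matrix (Fin p) (Fin p) ℝ) (A12 : Matrix (Fin p) (Fin r) ℝ)
    (A21 : Matrix (Fin r) (Fin p) ℝ) (A22 : Matrix (Fin r) (Fin r) ℝ)
    (B1 : Matrix (Fin p) (Fin m) ℝ) (B2 : Matrix (Fin r) (Fin m) ℝ)
    (hobs : ObsPair A12 A22)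
    (hctrb : CtrbPair (fromBlocks A11 A12 A21 A22) (fromRows B1 B2))
    (K : Matrix (Fin r) (Fin p) ℝ) (hK : IsHurwitz (A22 + K * A12)) (i : Fin p) :
    let Adi : Matrix (Fin 1 ⊕ Fin r) (Fin 1 ⊕ Fin r) ℝ :=
      fromBlocks (0 : Matrix (Fin 1) (Fin 1) ℝ) (Matrix.of fun _ j => A12 i j)
        (0 : Matrix (Fin r) (Fin 1) ℝ) (A22 + K * A12)
    let Bdi : Matrix (Fin 1 ⊕ Fin r) (Fin p ⊕ Fin m) ℝ :=
      fromBlocks (Matrix.of fun _ j => (A11 - A12 * K) i j)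
        (Matrix.of fun _ k => B1 i k) (AKmat A11 A12 A21 A22 K) (K * B1 + B2)
    let Cdi : Matrix (Fin 1) (Fin 1 ⊕ Fin r) ℝ :=
      fromCols (1 : Matrix (Fin 1) (Fin 1) ℝ) (0 : Matrix (Fin 1) (Fin r) ℝ)
    ∀ μ : ℂ, 0 ≤ μ.re →
      (fromRows (mapC Adi - μ • (1 : Matrix (Fin 1 ⊕ Fin r) (Fin 1 ⊕ Fin r) ℂ))
        (mapC Cdi)).rank = 1 + r ∧
      (fromCols (mapC Adi - μ • (1 : Matrix (Fin 1 ⊕ Fin r) (Fin 1 ⊕ Fin r) ℂ))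
        (mapC Bdi)).rank = 1 + r := by
  intro Adi Bdi Cdi μ hμ
  have hcard1r : Fintype.card (Fin 1 ⊕ Fin r) = 1 + r := by simp
  have hcardpr : Fintype.card (Fin p ⊕ Fin r) = p + r := by simp
  set F : Matrix (Fin r) (Fin r) ℝ := A22 + K * A12 with hFdef
  constructor
  · -- detectability
    rw [← hcard1r]
    rw [aux_rank_eq_card]
    intro v hv
    have hA : (mapC Adi - μ • 1) *ᵥ v = 0 :=
      funext fun t => congrFun hv (Sum.inl t)
    have hC : (mapC Cdi) *ᵥ v = 0 :=
      funext fun t => congrFun hv (Sum.inr t)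
    have hv0 : v (Sum.inl 0) = 0 := by
      have h := congrFun hC 0
      simpa [Cdi, mapC, Matrix.mulVec, dotProduct, Fintype.sum_sum_type,
        Matrix.fromCols, Matrix.one_apply] using h
    have hsplit : mapC Adi - μ • 1 =
        fromBlocks (-(μ • 1) : Matrix (Fin 1) (Fin 1) ℂ)
          (mapC (Matrix.of fun (_ : Fin 1) j => A12 i j))
          (0 : Matrix (Fin r) (Fin 1) ℂ) (mapC F - μ • 1) := by
      ext x y
      cases x <;> cases y <;>
        simp [Adi, mapC, Matrix.one_apply, Matrix.fromBlocks, hFdef, Matrix.add_apply]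
    rw [hsplit, Matrix.fromBlocks_mulVec] at hA
    have hFy : (mapC F - μ • 1) *ᵥ (v ∘ Sum.inr) = 0 := by
      have h : (0 : Matrix (Fin r) (Fin 1) ℂ) *ᵥ (v ∘ Sum.inl)
          + (mapC F - μ • 1) *ᵥ (v ∘ Sum.inr) = 0 :=
        funext fun t => congrFun hA (Sum.inr t)
      rwa [Matrix.zero_mulVec, zero_add] at h
    have hvr : v ∘ Sum.inr = 0 := aux_hurwitz_mulVec F hK hμ _ hFy
    funext z
    cases z with
    | inl a =>
      have ha : a = 0 := Subsingleton.elim a 0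
      rw [ha]; exact hv0
    | inr t => exact congrFun hvr t
  · -- stabilizability
    rw [← hcard1r, ← Matrix.rank_transpose, aux_rank_eq_card]
    intro w hw
    rw [Matrix.mulVec_transpose, Matrix.vecMul_fromCols] at hw
    have hwA : w ᵥ* (mapC Adi - μ • 1) = 0 :=
      funext fun y => congrFun hw (Sum.inl y)
    have hwB : w ᵥ* mapC Bdi = 0 :=
      funext fun y => congrFun hw (Sum.inr y)
    have hwA' : w ᵥ* mapC Adi = μ • w := by
      rwa [Matrix.vecMul_sub, aux_vecMul_smul_one, sub_eq_zero] at hwA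
    set w0 : ℂ := w (Sum.inl 0) with hw0def
    set w1 : Fin r → ℂ := w ∘ Sum.inr with hw1def
    set eI : Fin p → ℂ := Pi.single i 1 with heIdef
    have hAdiMap : mapC Adi = fromBlocks (0 : Matrix (Fin 1) (Fin 1) ℂ)
        (mapC (Matrix.of fun (_ : Fin 1) j => A12 i j))
        (0 : Matrix (Fin r) (Fin 1) ℂ) (mapC F) := by
      ext x y
      cases x <;> cases y <;> simp [Adi, mapC, Matrix.fromBlocks, hFdef, Matrix.add_apply]
    have hBdiMap : mapC Bdi = fromBlocks
        (mapC (Matrix.of fun (_ : Fin 1) j => (A11 - A12 * K) i j))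
        (mapC (Matrix.of fun (_ : Fin 1) k => B1 i k))
        (mapC (AKmat A11 A12 A21 A22 K)) (mapC (K * B1 + B2)) := by
      ext x y
      cases x <;> cases y <;> simp [Bdi, mapC, Matrix.fromBlocks]
    rw [hAdiMap, Matrix.vecMul_fromBlocks] at hwA'
    rw [hBdiMap, Matrix.vecMul_fromBlocks] at hwB
    have hE1 : μ * w0 = 0 := by
      have h := congrFun hwA' (Sum.inl 0)
      simpa [Matrix.vecMul_zero] using h.symm
    have h2 : w0 • (eI ᵥ* mapC A12) + w1 ᵥ* mapC F = μ • w1 := by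
      have h : (w ∘ Sum.inl) ᵥ* mapC (Matrix.of fun (_ : Fin 1) j => A12 i j)
          + (w ∘ Sum.inr) ᵥ* mapC F = μ • w1 :=
        funext fun t => congrFun hwA' (Sum.inr t)
      rwa [aux_fin_one_vecMul] at h
    have h3 : w0 • (eI ᵥ* mapC (A11 - A12 * K)) + w1 ᵥ* mapC (AKmat A11 A12 A21 A22 K) = 0 := by
      have h : (w ∘ Sum.inl) ᵥ* mapC (Matrix.of fun (_ : Fin 1) j => (A11 - A12 * K) i j)
          + (w ∘ Sum.inr) ᵥ* mapC (AKmat A11 A12 A21 A22 K) = 0 :=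
        funext fun t => congrFun hwB (Sum.inl t)
      rwa [aux_fin_one_vecMul] at h
    have h4 : w0 • (eI ᵥ* mapC B1) + w1 ᵥ* mapC (K * B1 + B2) = 0 := by
      have h : (w ∘ Sum.inl) ᵥ* mapC (Matrix.of fun (_ : Fin 1) k => B1 i k)
          + (w ∘ Sum.inr) ᵥ* mapC (K * B1 + B2) = 0 :=
        funext fun t => congrFun hwB (Sum.inr t)
      rwa [aux_fin_one_vecMul] at h
    -- normalize
    have h2K := congrArg (fun u => u ᵥ* mapC K) h2
    simp only [hFdef, AKmat, mapC_add, mapC_sub, mapC_mul, Matrix.vecMul_add,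
      Matrix.vecMul_sub, Matrix.add_vecMul, Matrix.sub_vecMul, Matrix.smul_vecMul,
      ← Matrix.vecMul_vecMul, smul_add, smul_sub] at h2 h3 h4 h2K
    have hE1' : (μ * w0) • eI = 0 := by rw [hE1, zero_smul]
    -- build the left-kernel vector for the big pair
    set x1 : Fin p → ℂ := w0 • eI + w1 ᵥ* mapC K with hx1def
    set x : Fin p ⊕ Fin r → ℂ := Sum.elim x1 w1 with hxdef
    have hfull : ∀ u : Fin p ⊕ Fin r → ℂ,
        u ᵥ* (mapC (fromBlocks A11 A12 A21 A22) - μ • 1) = 0 →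
        u ᵥ* mapC (fromRows B1 B2) = 0 → u = 0 := by
      intro u h1 h2'
      have hrk : ((fromCols (mapC (fromBlocks A11 A12 A21 A22)
          - μ • (1 : Matrix (Fin p ⊕ Fin r) (Fin p ⊕ Fin r) ℂ))
          (mapC (fromRows B1 B2)))ᵀ).rank = Fintype.card (Fin p ⊕ Fin r) := by
        rw [Matrix.rank_transpose, hctrb μ, hcardpr]
      refine (aux_rank_eq_card _).mp hrk u ?_
      rw [Matrix.mulVec_transpose, Matrix.vecMul_fromCols, h1, h2']
      funext z; cases z <;> rfl
    have hxA : x ᵥ* (mapC (fromBlocks A11 A12 A21 A22) - μ • 1) = 0 := by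
      rw [Matrix.vecMul_sub, aux_vecMul_smul_one, sub_eq_zero]
      have hAmap : mapC (fromBlocks A11 A12 A21 A22)
          = fromBlocks (mapC A11) (mapC A12) (mapC A21) (mapC A22) := by
        ext a b; cases a <;> cases b <;> simp [mapC, Matrix.fromBlocks]
      rw [hAmap, Matrix.vecMul_fromBlocks]
      have hxl : x ∘ Sum.inl = x1 := rfl
      have hxr : x ∘ Sum.inr = w1 := rfl
      rw [hxl, hxr]
      have hcompL : x1 ᵥ* mapC A11 + w1 ᵥ* mapC A21 = μ • x1 := by
        rw [show μ • x1 = μ • (w1 ᵥ* mapC K) by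
          rw [hx1def, smul_add, smul_smul, hE1, zero_smul, zero_add]]
        simp only [hx1def, Matrix.add_vecMul, Matrix.smul_vecMul, ← Matrix.vecMul_vecMul]
        linear_combination (norm := module) h3 + h2K
      have hcompR : x1 ᵥ* mapC A12 + w1 ᵥ* mapC A22 = μ • w1 := by
        simp only [hx1def, Matrix.add_vecMul, Matrix.smul_vecMul, ← Matrix.vecMul_vecMul]
        linear_combination (norm := module) h2
      funext z
      cases z with
      | inl a => exact congrFun hcompL a
      | inr t => exact congrFun hcompR t
    have hxB : x ᵥ* mapC (fromRows B1 B2) = 0 := by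
      have hBmap : mapC (fromRows B1 B2) = fromRows (mapC B1) (mapC B2) := by
        ext a b; cases a <;> simp [mapC, Matrix.fromRows_apply_inl, Matrix.fromRows_apply_inr]
      rw [hBmap, hxdef, Matrix.sumElim_vecMul_fromRows]
      simp only [hx1def, Matrix.add_vecMul, Matrix.smul_vecMul, ← Matrix.vecMul_vecMul]
      linear_combination (norm := module) h4
    have hx0 : x = 0 := hfull x hxA hxB
    have hw1z : w1 = 0 := funext fun t => congrFun hx0 (Sum.inr t)
    have hw0z : w0 = 0 := by
      have h : x1 i = 0 := congrFun hx0 (Sum.inl i)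
      rw [hx1def, hw1z] at h
      simpa [heIdef, Matrix.zero_vecMul] using h
    funext z
    cases z with
    | inl a =>
      have ha : a = 0 := Subsingleton.elim a 0
      rw [ha]; exact hw0z
    | inr t => exact congrFun hw1z t
end
end
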